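/- For every φ̃ ∈ z⁻¹ℂ[[z⁻¹]], the formal Borel transform of (C_{id−1} − Id)φ̃, i.e. of φ̃(z−1) − φ̃(z), equals (e^ζ − 1)·𝓑φ̃(ζ) in ℂ[[ζ]], where e^ζ denotes the exponential power series. Consequently, the Borel counterpart of the inverse operator E := (C_{id−1} − Id)⁻¹ : z⁻²ℂ[[z⁻¹]] → z⁻¹ℂ[[z⁻¹]] is division by e^ζ − 1: for every ψ̃ ∈ z⁻²ℂ[[z⁻¹]], (e^ζ − 1)·𝓑(Eψ̃) = 𝓑ψ̃. -/

import Mathlib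

open Finset
open scoped Real

noncomputable section

/-- The formal derivative `d/dz` acting on `ℂ[[z⁻¹]]`: here a power series is an
element of `PowerSeries ℂ` whose `n`-th coefficient represents the coefficient
of `z^{-n}`, and `d/dz (z^{-n}) = -n z^{-n-1}`. -/
def Dz (φ : PowerSeries ℂ) : PowerSeries ℂ :=
  PowerSeries.mk fun n => match n with
    | 0 => 0
    | m + 1 => -(m : ℂ) * PowerSeries.coeff m φ

/-- The composition operator `C_{id-1} : φ(z) ↦ φ(z-1)` on `ℂ[[z⁻¹]]`, defined by
the formal Taylor expansion `Σ_{k≥0} ((-1)^k / k!) (d/dz)^k φ`; since `(d/dz)^k`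
raises the order in `z⁻¹` by at least `k`, the `n`-th coefficient only receives
contributions from `k ≤ n`. -/
def Cm1 (φ : PowerSeries ℂ) : PowerSeries ℂ :=
  PowerSeries.mk fun n => ∑ k ∈ Finset.range (n + 1),
    ((-1 : ℂ) ^ k / (Nat.factorial k : ℂ)) * PowerSeries.coeff n (Dz^[k] φ)

/-- The composition operator `C_{id+b} : φ(z) ↦ φ(z+b(z))` on `ℂ[[z⁻¹]]`, defined
by the formal Taylor expansion `Σ_{k≥0} (b^k / k!) (d/dz)^k φ`; it is well defined
when `b ∈ z⁻¹ℂ[[z⁻¹]]`, in which case the `n`-th coefficient only receives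
contributions from `k ≤ n`. -/
def Cb (b φ : PowerSeries ℂ) : PowerSeries ℂ :=
  PowerSeries.mk fun n => ∑ k ∈ Finset.range (n + 1),
    ((Nat.factorial k : ℂ))⁻¹ * PowerSeries.coeff n (b ^ k * Dz^[k] φ)

/-- The formal Borel transform `𝓑 : Σ_{n≥0} cₙ z^{-n-1} ↦ Σ_{n≥0} cₙ ζⁿ/n!`
(in the source, the `n`-th coefficient of the `PowerSeries` represents the
coefficient of `z^{-n}`; in the target it represents the coefficient of `ζ^n`). -/
def borelT (φ : PowerSeries ℂ) : PowerSeries ℂ :=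
  PowerSeries.mk fun n => PowerSeries.coeff (n + 1) φ / (Nat.factorial n : ℂ)

lemma coeff_Dz_succ (φ : PowerSeries ℂ) (m : ℕ) :
    PowerSeries.coeff (m + 1) (Dz φ) = -(m : ℂ) * PowerSeries.coeff m φ := by
  simp [Dz]

lemma coeff_Dz_iter (k : ℕ) : ∀ (φ : PowerSeries ℂ) (n : ℕ), k ≤ n →
    PowerSeries.coeff (n + 1) (Dz^[k] φ)
      = (-1 : ℂ) ^ k * (n.descFactorial k : ℂ) * PowerSeries.coeff (n + 1 - k) φ := by
  induction k with
  | zero => intro φ n _; simp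
  | succ k ih =>
    intro φ n hk
    rw [Function.iterate_succ_apply, ih (Dz φ) n (Nat.le_of_succ_le hk)]
    have h1 : n + 1 - k = (n - k - 1) + 1 + 1 := by omega
    have h2 : n + 1 - (k + 1) = n - k - 1 + 1 := by omega
    rw [h1, coeff_Dz_succ, h2]
    have h3 : ((n - k - 1 + 1 : ℕ) : ℂ) = (n : ℂ) - k := by
      have : (n - k - 1 + 1 : ℕ) = n - k := by omega
      rw [this, Nat.cast_sub (by omega)]
    rw [h3, Nat.descFactorial_succ, Nat.cast_mul, Nat.cast_sub (by omega)]
    ring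

lemma coeff_Dz_iter_diag (φ : PowerSeries ℂ) (n : ℕ) :
    PowerSeries.coeff (n + 1) (Dz^[n + 1] φ) = 0 := by
  rw [Function.iterate_succ_apply, coeff_Dz_iter n (Dz φ) n le_rfl]
  have : n + 1 - n = 1 := by omega
  rw [this]
  have : PowerSeries.coeff 1 (Dz φ) = 0 := by
    have := coeff_Dz_succ φ 0; simpa using this
  rw [this]; ring

lemma borel_key (φ : PowerSeries ℂ) :
    borelT (Cm1 φ - φ) = (PowerSeries.exp ℂ - 1) * borelT φ := by
  ext n
  rw [PowerSeries.coeff_mul]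
  rw [Finset.Nat.sum_antidiagonal_eq_sum_range_succ_mk]
  simp only [borelT, PowerSeries.coeff_mk, map_sub, Cm1, PowerSeries.coeff_mk]
  rw [Finset.sum_range_succ, coeff_Dz_iter_diag, mul_zero, add_zero]
  have hL : ∀ k ∈ Finset.range (n + 1),
      ((-1 : ℂ) ^ k / (Nat.factorial k : ℂ)) * PowerSeries.coeff (n + 1) (Dz^[k] φ)
        = ((n.descFactorial k : ℂ) / (Nat.factorial k : ℂ)) * PowerSeries.coeff (n + 1 - k) φ := by
    intro k hk
    rw [coeff_Dz_iter k φ n (by simpa using Nat.lt_succ_iff.mp (Finset.mem_range.mp hk))]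
    have h1 : ((-1 : ℂ) ^ k) * ((-1 : ℂ) ^ k) = 1 := by
      rw [← mul_pow]; norm_num
    calc ((-1 : ℂ) ^ k / (Nat.factorial k : ℂ)) *
          ((-1 : ℂ) ^ k * (n.descFactorial k : ℂ) * PowerSeries.coeff (n + 1 - k) φ)
        = ((-1 : ℂ) ^ k * (-1 : ℂ) ^ k) *
            (((n.descFactorial k : ℂ) / (Nat.factorial k : ℂ)) * PowerSeries.coeff (n + 1 - k) φ) := by
          ring
      _ = _ := by rw [h1, one_mul]
  rw [Finset.sum_congr rfl hL]
  rw [Finset.sum_range_succ']  -- splits off k = 0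
  rw [Finset.sum_range_succ']
  simp only [Nat.descFactorial_zero, Nat.factorial_zero, Nat.cast_one, div_one, one_mul,
    Nat.sub_zero, Nat.cast_ofNat]
  rw [show (PowerSeries.coeff 0) (PowerSeries.exp ℂ) - (PowerSeries.coeff 0) (1 : PowerSeries ℂ) = 0 from by
    simp [PowerSeries.coeff_exp, PowerSeries.coeff_one]]
  rw [zero_mul, add_zero, add_sub_cancel_right, Finset.sum_div]
  apply Finset.sum_congr rfl
  intro k hk
  have hk' : k + 1 ≤ n := Nat.succ_le_of_lt (Finset.mem_range.mp hk)
  have hexp : PowerSeries.coeff (k + 1) (PowerSeries.exp ℂ) -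
      PowerSeries.coeff (k + 1) (1 : PowerSeries ℂ) =
      ((Nat.factorial (k + 1) : ℂ))⁻¹ := by
    simp [PowerSeries.coeff_exp, PowerSeries.coeff_one]
  rw [hexp]
  have h1 : n + 1 - (k + 1) = n - k := by omega
  have h2 : n - (k + 1) + 1 = n - k := by omega
  rw [h1, h2]
  have hfac : ((n - (k+1)).factorial : ℂ) * (n.descFactorial (k+1) : ℂ) = (n.factorial : ℂ) := by
    rw [← Nat.cast_mul, Nat.factorial_mul_descFactorial hk']
  have f1 : ((k+1).factorial : ℂ) ≠ 0 := Nat.cast_ne_zero.mpr (Nat.factorial_ne_zero _)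
  have f2 : ((n - (k+1)).factorial : ℂ) ≠ 0 := Nat.cast_ne_zero.mpr (Nat.factorial_ne_zero _)
  have f3 : ((n).factorial : ℂ) ≠ 0 := Nat.cast_ne_zero.mpr (Nat.factorial_ne_zero _)
  field_simp
  rw [← hfac, Nat.descFactorial_succ, Nat.cast_mul]
  ring


/-- for `φ̃ ∈ z⁻¹ℂ[[z⁻¹]]`, `𝓑((C_{id-1} - Id)φ̃) = (e^ζ - 1)·𝓑φ̃`;
consequently the Borel counterpart of `E := (C_{id-1} - Id)⁻¹` is division by
`e^ζ - 1`: for `ψ̃ ∈ z⁻²ℂ[[z⁻¹]]`, `(e^ζ - 1)·𝓑(Eψ̃) = 𝓑ψ̃`. -/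
theorem statement3 :
    (∀ φ : PowerSeries ℂ, PowerSeries.coeff 0 φ = 0 →
      borelT (Cm1 φ - φ) = (PowerSeries.exp ℂ - 1) * borelT φ) ∧
    (∀ E : PowerSeries ℂ → PowerSeries ℂ,
      (∀ ψ : PowerSeries ℂ, (∀ n < 2, PowerSeries.coeff n ψ = 0) →
        PowerSeries.coeff 0 (E ψ) = 0 ∧ Cm1 (E ψ) - E ψ = ψ) →
      ∀ ψ : PowerSeries ℂ, (∀ n < 2, PowerSeries.coeff n ψ = 0) →
        (PowerSeries.exp ℂ - 1) * borelT (E ψ) = borelT ψ) := by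
  constructor
  · intro φ _; exact borel_key φ
  · intro E hE ψ hψ
    obtain ⟨_, heq⟩ := hE ψ hψ
    rw [← borel_key (E ψ), heq]
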